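/- arXiv:1602.04061 — 8 statements merged into one kernel-verified Lean document; each statement's English description precedes it below -/
import Mathlib

section
/- Let A be a finite alphabet, x : ℤ × ℤ → A a configuration, a ∈ A, and y the dyadic encoding of x with filler a. Let P be a pattern of size n ≥ 1 and let (n₀, k₀) ∈ ℤ × ℤ. Then P appears in x at position (n₀, k₀) if and only if the function ℓ defined by ℓ(c) = y(n₀ + n + 1, 2^{n+1}·k₀ + c) for 0 ≤ c ≤ 2^{n+1} − 1 belongs to the set p̃ of encoded linear patterns of P. -/
/-- `y` is the dyadic encoding of the configuration `x : ℤ × ℤ → A` with filler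
letter `a` (the second component `π₂(Φ(x))` of the paper's map `Φ`): it satisfies
`y(n+1, 2k) = x(n, k)`, `y(n+1, 2k+1) = y(n, k)`, and `y(n, -1) = a` along the
fracture column. -/
def IsDyadicEncoding {A : Type} (x : ℤ × ℤ → A) (a : A) (y : ℤ × ℤ → A) : Prop :=
  (∀ n k : ℤ, y (n + 1, 2 * k) = x (n, k)) ∧
  (∀ n k : ℤ, y (n + 1, 2 * k + 1) = y (n, k)) ∧
  (∀ n : ℤ, y (n, -1) = a)

/-- The support of size `n`: `𝕌_n = {(p,q) : p ≤ n-1, q ≤ 2^p - 1}` (natural subtraction). -/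
def U (n : ℕ) : Set (ℕ × ℕ) := {pq | pq.1 ≤ n - 1 ∧ pq.2 ≤ 2 ^ pq.1 - 1}

/-- The pattern `P : 𝕌_n → A` appears in the configuration `x` at position `(n₀, k₀)`. -/
def AppearsAt {A : Type} {n : ℕ} (P : U n → A) (x : ℤ × ℤ → A) (g : ℤ × ℤ) : Prop :=
  ∀ pq : U n, x (g.1 + (pq.1.1 : ℤ), 2 ^ pq.1.1 * g.2 + (pq.1.2 : ℤ)) = P pq

/-- The set `p̃` of encoded linear patterns of a pattern `P : 𝕌_n → A`: functions
`ℓ : {0,…,2^(n+1)-1} → A` obtained by reading, in some dyadic encoding `y'` of some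
configuration `x'` in which `P` appears at position `(0, 0)`, the row `n + 1`. -/
def encodedLinearPatterns {A : Type} (n : ℕ) (P : U n → A) :
    Set (Fin (2 ^ (n + 1)) → A) :=
  {ℓ | ∃ (x' : ℤ × ℤ → A) (a' : A) (y' : ℤ × ℤ → A),
    AppearsAt P x' (0, 0) ∧ IsDyadicEncoding x' a' y' ∧
    ∀ c : Fin (2 ^ (n + 1)), ℓ c = y' ((n : ℤ) + 1, ((c : ℕ) : ℤ))}

lemma dyadic_step {A : Type} {x : ℤ × ℤ → A} {a : A} {y : ℤ × ℤ → A}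
    (hy : IsDyadicEncoding x a y) :
    ∀ (s : ℕ) (m k : ℤ), y (m + (s : ℤ), 2 ^ s * k + (2 ^ s - 1)) = y (m, k) := by
  intro s
  induction s with
  | zero => intro m k; norm_num
  | succ s ih =>
    intro m k
    have hrow : m + ((s + 1 : ℕ) : ℤ) = (m + (s : ℤ)) + 1 := by push_cast; ring
    have hcol : (2 : ℤ) ^ (s + 1) * k + (2 ^ (s + 1) - 1)
        = 2 * (2 ^ s * k + (2 ^ s - 1)) + 1 := by ring
    rw [hrow, hcol, hy.2.1, ih]

lemma dyadic_read {A : Type} {x : ℤ × ℤ → A} {a : A} {y : ℤ × ℤ → A}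
    (hy : IsDyadicEncoding x a y) (s : ℕ) (m k : ℤ) :
    y (m + 1 + (s : ℤ), 2 ^ s * (2 * k) + (2 ^ s - 1)) = x (m, k) := by
  rw [dyadic_step hy s (m + 1) (2 * k), hy.1]

def auxY {A : Type} (y : ℤ × ℤ → A) (n₀ k₀ : ℤ) : ℤ × ℤ → A := fun mc =>
  if 0 ≤ mc.1 then y (n₀ + mc.1, 2 ^ mc.1.toNat * k₀ + mc.2)
  else y (n₀, k₀ + 2 ^ (-mc.1).toNat * mc.2 + (2 ^ (-mc.1).toNat - 1))

def auxX {A : Type} (x y : ℤ × ℤ → A) (n₀ k₀ : ℤ) : ℤ × ℤ → A := fun mk =>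
  if 0 ≤ mk.1 then x (n₀ + mk.1, 2 ^ mk.1.toNat * k₀ + mk.2)
  else auxY y n₀ k₀ (mk.1 + 1, 2 * mk.2)

lemma aux_encoding {A : Type} {x : ℤ × ℤ → A} {a : A} {y : ℤ × ℤ → A}
    (hy : IsDyadicEncoding x a y) (n₀ k₀ : ℤ) :
    IsDyadicEncoding (auxX x y n₀ k₀) (y (n₀, k₀ - 1)) (auxY y n₀ k₀) := by
  refine ⟨?_, ?_, ?_⟩
  · intro m k
    by_cases hm : 0 ≤ m
    · simp only [auxY, auxX]
      rw [if_pos (show (0:ℤ) ≤ m + 1 by omega), if_pos hm]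
      have ht : (m + 1).toNat = m.toNat + 1 := by omega
      rw [ht, show n₀ + (m + 1) = (n₀ + m) + 1 by ring,
        show (2:ℤ) ^ (m.toNat + 1) * k₀ + 2 * k = 2 * (2 ^ m.toNat * k₀ + k) by ring,
        hy.1]
    · simp only [auxX]
      rw [if_neg hm]
  · intro m k
    by_cases hm : 0 ≤ m
    · simp only [auxY]
      rw [if_pos (show (0:ℤ) ≤ m + 1 by omega), if_pos hm]
      have ht : (m + 1).toNat = m.toNat + 1 := by omega
      rw [ht, show n₀ + (m + 1) = (n₀ + m) + 1 by ring,
        show (2:ℤ) ^ (m.toNat + 1) * k₀ + (2 * k + 1) = 2 * (2 ^ m.toNat * k₀ + k) + 1 by ring,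
        hy.2.1]
    · by_cases hm1 : 0 ≤ m + 1
      · have hm0 : m = -1 := by omega
        subst hm0
        simp only [auxY]
        norm_num
        rw [← add_assoc]
      · simp only [auxY]
        rw [if_neg hm1, if_neg hm]
        have ht : (-m).toNat = (-(m+1)).toNat + 1 := by omega
        have hcol : k₀ + 2 ^ (-(m + 1)).toNat * (2 * k + 1) + (2 ^ (-(m + 1)).toNat - 1)
            = k₀ + 2 ^ (-m).toNat * k + (2 ^ (-m).toNat - 1) := by
          rw [ht, pow_succ]; ring
        rw [hcol]
  · intro m
    by_cases hm : 0 ≤ m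
    · simp only [auxY]
      rw [if_pos hm]
      have := dyadic_step hy m.toNat n₀ (k₀ - 1)
      rw [show ((m.toNat : ℕ) : ℤ) = m by omega] at this
      rw [show (2:ℤ) ^ m.toNat * k₀ + (-1) = 2 ^ m.toNat * (k₀ - 1) + (2 ^ m.toNat - 1) by ring]
      exact this
    · simp only [auxY]
      rw [if_neg hm,
        show k₀ + 2 ^ (-m).toNat * (-1) + ((2:ℤ) ^ (-m).toNat - 1) = k₀ - 1 by ring]

/-- A pattern `P` of size `n ≥ 1` appears in `x` at position `(n₀, k₀)` if and only if
the linear word read in the dyadic encoding `y` of `x` on row `n₀ + n + 1` at columns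
`2^(n+1)·k₀ + c`, `0 ≤ c ≤ 2^(n+1) - 1`, belongs to the set `p̃` of encoded linear
patterns of `P`. -/
theorem appears_iff_encodedLinear {A : Type} [Fintype A] [Nonempty A]
    (x : ℤ × ℤ → A) (a : A) (y : ℤ × ℤ → A) (hy : IsDyadicEncoding x a y)
    (n : ℕ) (hn : 1 ≤ n) (P : U n → A) (n₀ k₀ : ℤ) :
    AppearsAt P x (n₀, k₀) ↔
      (fun c : Fin (2 ^ (n + 1)) =>
          y (n₀ + (n : ℤ) + 1, 2 ^ (n + 1) * k₀ + ((c : ℕ) : ℤ)))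
        ∈ encodedLinearPatterns n P := by
  constructor
  · intro hap
    refine ⟨auxX x y n₀ k₀, y (n₀, k₀ - 1), auxY y n₀ k₀, ?_, aux_encoding hy n₀ k₀, ?_⟩
    · intro pq
      have h := hap pq
      simp only [auxX, Prod.fst, Prod.snd, zero_add, mul_zero] at *
      rw [if_pos (Int.natCast_nonneg pq.1.1), Int.toNat_natCast]
      exact h
    · intro c
      simp only [auxY]
      rw [if_pos (show (0:ℤ) ≤ (n:ℤ) + 1 by positivity),
        show (((n:ℤ) + 1)).toNat = n + 1 by omega, ← add_assoc]
  · rintro ⟨x', a', y', hap', hy', hℓ⟩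
    rintro ⟨⟨p, q⟩, hp, hq⟩
    simp only at *
    have hp2 : p ≤ n - 1 := hp
    have hpn : p < n := by omega
    set s : ℕ := n - p with hs
    have hps : p + s = n := by omega
    have h1 : (1:ℕ) ≤ 2 ^ s := Nat.one_le_two_pow
    have h1p : (1:ℕ) ≤ 2 ^ p := Nat.one_le_two_pow
    have hq2 : q ≤ 2 ^ p - 1 := hq
    have hq' : q + 1 ≤ 2 ^ p := by omega
    set cn : ℕ := 2 ^ (s + 1) * q + (2 ^ s - 1) with hcn
    have hclt : cn < 2 ^ (n + 1) := by
      have h4 : (2:ℕ) ^ s ≤ 2 ^ (s + 1) := Nat.pow_le_pow_right (by norm_num) (Nat.le_succ s)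
      have h2' : 2 ^ (s + 1) * q + 2 ^ (s + 1) ≤ 2 ^ (n + 1) := by
        calc 2 ^ (s + 1) * q + 2 ^ (s + 1) = 2 ^ (s + 1) * (q + 1) := by ring
          _ ≤ 2 ^ (s + 1) * 2 ^ p := Nat.mul_le_mul_left _ hq'
          _ = 2 ^ (n + 1) := by rw [← pow_add]; congr 1; omega
      have hlt : cn < 2 ^ (s + 1) * q + 2 ^ s :=
        Nat.add_lt_add_left (Nat.sub_lt (by positivity) one_pos) _
      exact lt_of_lt_of_le hlt (le_trans (Nat.add_le_add_left h4 _) h2')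
    have hkey := hℓ ⟨cn, hclt⟩
    simp only at hkey
    have hcast : ((cn : ℕ) : ℤ) = 2 ^ (s + 1) * (q : ℤ) + ((2:ℤ) ^ s - 1) := by
      rw [hcn]
      push_cast [Nat.cast_sub h1]
      ring
    -- left side: y (n₀+n+1, 2^(n+1) k₀ + cn) = x (n₀+p, 2^p k₀ + q)
    have hL : y (n₀ + (n : ℤ) + 1, 2 ^ (n + 1) * k₀ + (cn : ℤ))
        = x (n₀ + (p : ℤ), 2 ^ p * k₀ + (q : ℤ)) := by
      have := dyadic_read hy s (n₀ + (p : ℤ)) (2 ^ p * k₀ + (q : ℤ))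
      rw [show n₀ + (p : ℤ) + 1 + (s : ℤ) = n₀ + (n : ℤ) + 1 by
            have : (p : ℤ) + (s : ℤ) = (n : ℤ) := by exact_mod_cast hps
            linarith] at this
      rw [show (2:ℤ) ^ s * (2 * (2 ^ p * k₀ + (q : ℤ))) + (2 ^ s - 1)
            = 2 ^ (n + 1) * k₀ + ((cn : ℕ) : ℤ) by
          rw [hcast, show n + 1 = s + 1 + p by omega, pow_add, pow_add]; ring] at this
      exact this
    -- right side: y' (n+1, cn) = x' (p, q)
    have hR : y' ((n : ℤ) + 1, (cn : ℤ)) = x' ((p : ℤ), (q : ℤ)) := by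
      have := dyadic_read hy' s ((p : ℤ)) ((q : ℤ))
      rw [show (p : ℤ) + 1 + (s : ℤ) = (n : ℤ) + 1 by
            have : (p : ℤ) + (s : ℤ) = (n : ℤ) := by exact_mod_cast hps
            linarith] at this
      rw [show (2:ℤ) ^ s * (2 * (q : ℤ)) + (2 ^ s - 1) = ((cn : ℕ) : ℤ) by
            rw [hcast]; ring] at this
      exact this
    have hP := hap' ⟨(p, q), hp, hq⟩
    simp only [zero_add, mul_zero] at hP
    rw [hL.symm, hkey, hR, hP]
end

section
/- Let A be a finite alphabet, x : ℤ × ℤ → A a configuration, a ∈ A, and y the dyadic encoding of x with filler a. Then for every n ≥ 1, every (n₀, k₀) ∈ ℤ × ℤ, every natural number k and every integer c with 0 ≤ c ≤ 2^{n+1} − 1, one has y(n₀ + n + 1 + k, 2^{n+1+k}·k₀ + 2^k·(c + 1) − 1) = y(n₀ + n + 1, 2^{n+1}·k₀ + c); i.e. every entry of the bottom linear encoding of the pattern of x at position (n₀, k₀) with support 𝕌_n reappears, at explicitly computable positions, on every row k further below. -/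
/-- Every entry of the bottom linear encoding of the pattern of `x` at position
`(n₀, k₀)` with support `𝕌_n` reappears, at explicitly computable positions, on
every row `k` further below. -/
theorem dyadicEncoding_entries_reappear {A : Type} [Fintype A] [Nonempty A]
    (x : ℤ × ℤ → A) (a : A) (y : ℤ × ℤ → A) (hy : IsDyadicEncoding x a y)
    (n : ℕ) (hn : 1 ≤ n) (n₀ k₀ : ℤ) (k : ℕ) (c : ℤ)
    (hc0 : 0 ≤ c) (hc1 : c ≤ 2 ^ (n + 1) - 1) :
    y (n₀ + n + 1 + k, 2 ^ (n + 1 + k) * k₀ + 2 ^ k * (c + 1) - 1)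
      = y (n₀ + n + 1, 2 ^ (n + 1) * k₀ + c) := by
  induction k with
  | zero => norm_num; ring_nf
  | succ k ih =>
      have h := hy.2.1 (n₀ + n + 1 + k)
        (2 ^ (n + 1 + k) * k₀ + 2 ^ k * (c + 1) - 1)
      rw [← ih, ← h]
      congr 1
      simp only [Prod.mk.injEq]
      constructor
      · push_cast; ring
      · push_cast [pow_succ]; ring
end

section
/- Let A be a finite alphabet, x : ℤ × ℤ → A a configuration, and P a pattern of size n ≥ 1. Then P appears in x (at some position) if and only if for every filler letter a ∈ A, letting y denote the dyadic encoding of x with filler a, there exist an integer k ≥ 1 and a function ℓ ∈ p̃^{(k)} ⊆ split(P) such that ℓ appears in y at some position (n₀, k₀) ∈ ℤ × ℤ. -/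
/-- The set `p̃⁽ᵏ⁾` of linear patterns encoding `P : 𝕌_n → A` on the row `n + k` of a
dyadic encoding: functions `ℓ : {0,…,2^(n+k)-1} → A` obtained by reading, in some
dyadic encoding `y'` of some configuration `x'` in which `P` appears at position
`(0, 0)`, the row `n + k`. The set `split(P)` is the union of the `p̃⁽ᵏ⁾` over `k ≥ 1`. -/
def encodedLinearPatternsAtDepth {A : Type} (n k : ℕ) (P : U n → A) :
    Set (Fin (2 ^ (n + k)) → A) :=
  {ℓ | ∃ (x' : ℤ × ℤ → A) (a' : A) (y' : ℤ × ℤ → A),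
    AppearsAt P x' (0, 0) ∧ IsDyadicEncoding x' a' y' ∧
    ∀ c : Fin (2 ^ (n + k)), ℓ c = y' ((n : ℤ) + (k : ℤ), ((c : ℕ) : ℤ))}

def encAux {A : Type} (x : ℤ × ℤ → A) (a : A) (r : ℤ) (j : ℤ) : A :=
  if j = -1 then a
  else if 2 ∣ j then x (r - 1, j / 2)
  else encAux x a (r - 1) ((j - 1) / 2)
termination_by j.natAbs
decreasing_by omega

lemma encAux_even {A : Type} (x : ℤ × ℤ → A) (a : A) (r k : ℤ) :
    encAux x a (r + 1) (2 * k) = x (r, k) := by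
  rw [encAux]
  have h1 : ¬ (2 * k = -1) := by omega
  have h2 : (2 : ℤ) ∣ 2 * k := ⟨k, rfl⟩
  simp [h1, h2]

lemma encAux_neg1 {A : Type} (x : ℤ × ℤ → A) (a : A) (r : ℤ) :
    encAux x a r (-1) = a := by rw [encAux]; simp

lemma encAux_odd {A : Type} (x : ℤ × ℤ → A) (a : A) (r k : ℤ) :
    encAux x a (r + 1) (2 * k + 1) = encAux x a r k := by
  by_cases hk : k = -1
  · subst hk
    have h : (2:ℤ) * -1 + 1 = -1 := by norm_num
    rw [h, encAux_neg1, encAux_neg1]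
  · rw [encAux]
    have h1 : ¬ (2 * k + 1 = -1) := by omega
    have h2 : ¬ ((2 : ℤ) ∣ 2 * k + 1) := by omega
    simp only [h1, h2, if_false]
    congr 1 <;> omega

lemma encAux_isDyadic {A : Type} (x : ℤ × ℤ → A) (a : A) :
    IsDyadicEncoding x a (fun p => encAux x a p.1 p.2) :=
  ⟨fun r k => encAux_even x a r k, fun r k => encAux_odd x a r k,
   fun r => encAux_neg1 x a r⟩

lemma congrP {A : Type} (f : ℤ × ℤ → A) {a b c d : ℤ} (h1 : a = c) (h2 : b = d) :
    f (a, b) = f (c, d) := by rw [h1, h2]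

lemma dyadic_L1 {A : Type} {x : ℤ × ℤ → A} {a : A} {y : ℤ × ℤ → A}
    (hy : IsDyadicEncoding x a y) :
    ∀ (t : ℕ) (r u : ℤ), y (r, 2 ^ (t + 1) * u + 2 ^ t - 1) = x (r - 1 - t, u) := by
  intro t
  induction t with
  | zero =>
    intro r u
    have h := hy.1 (r - 1) u
    have h1 : r - 1 + 1 = r := by ring
    rw [h1] at h
    have h2 : (2:ℤ) ^ (0 + 1) * u + 2 ^ 0 - 1 = 2 * u := by ring
    rw [congrP y rfl h2, h]
    exact congrP x (by push_cast; ring) rfl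
  | succ t ih =>
    intro t_r
    intro u
    have h2 : (2:ℤ) ^ (t + 1 + 1) * u + 2 ^ (t + 1) - 1
        = 2 * (2 ^ (t + 1) * u + 2 ^ t - 1) + 1 := by ring
    have h := hy.2.1 (t_r - 1) (2 ^ (t + 1) * u + 2 ^ t - 1)
    have h1 : t_r - 1 + 1 = t_r := by ring
    rw [h1] at h
    rw [congrP y rfl h2, h, ih]
    exact congrP x (by push_cast; ring) rfl

lemma dyadic_L2 {A : Type} {x : ℤ × ℤ → A} {a : A} {y : ℤ × ℤ → A}
    (hy : IsDyadicEncoding x a y) :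
    ∀ (t : ℕ) (r v : ℤ), y (r, 2 ^ t * v - 1) = y (r - t, v - 1) := by
  intro t
  induction t with
  | zero =>
    intro r v
    exact congrP y (by push_cast; ring) (by ring)
  | succ t ih =>
    intro r v
    have h2 : (2:ℤ) ^ (t + 1) * v - 1 = 2 * (2 ^ t * v - 1) + 1 := by ring
    have h := hy.2.1 (r - 1) (2 ^ t * v - 1)
    have h1 : r - 1 + 1 = r := by ring
    rw [h1] at h
    rw [congrP y rfl h2, h, ih]
    exact congrP y (by push_cast; ring) rfl

lemma trailing_decomp : ∀ c : ℕ, ∃ t u : ℕ, c + 1 = 2 ^ (t + 1) * u + 2 ^ t := by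
  intro c
  induction c using Nat.strong_induction_on with
  | _ c ih =>
    rcases Nat.even_or_odd c with ⟨u, hu⟩ | ⟨u, hu⟩
    · exact ⟨0, u, by omega⟩
    · have hu' : u < c := by omega
      obtain ⟨t, v, htv⟩ := ih u hu'
      refine ⟨t + 1, v, ?_⟩
      have hc : c + 1 = 2 * (u + 1) := by omega
      rw [hc, htv]; ring

/-- A pattern `P` of size `n ≥ 1` appears in `x` (at some position) if and only if, for
every filler letter `a` and corresponding dyadic encoding `y` of `x`, some element
`ℓ ∈ p̃⁽ᵏ⁾ ⊆ split(P)` (for some `k ≥ 1`) appears in `y` at some position `(n₀, k₀)`. -/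
theorem appears_iff_split_appears {A : Type} [Fintype A] [Nonempty A]
    (x : ℤ × ℤ → A) (n : ℕ) (hn : 1 ≤ n) (P : U n → A) :
    (∃ g : ℤ × ℤ, AppearsAt P x g) ↔
      ∀ (a : A) (y : ℤ × ℤ → A), IsDyadicEncoding x a y →
        ∃ k : ℕ, 1 ≤ k ∧ ∃ ℓ ∈ encodedLinearPatternsAtDepth n k P, ∃ n₀ k₀ : ℤ,
          ∀ c : Fin (2 ^ (n + k)),
            y (n₀ + (n : ℤ) + (k : ℤ), 2 ^ (n + k) * k₀ + ((c : ℕ) : ℤ)) = ℓ c := by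
  constructor
  · rintro ⟨g, hg⟩ a y hy
    refine ⟨1, le_rfl,
      fun c => y (g.1 + (n : ℤ) + ((1:ℕ) : ℤ), 2 ^ (n + 1) * g.2 + ((c : ℕ) : ℤ)),
      ?_, g.1, g.2, fun c => rfl⟩
    set x' : ℤ × ℤ → A := fun p =>
      if 0 ≤ p.1 then x (g.1 + p.1, 2 ^ p.1.toNat * g.2 + p.2) else y g with hx'
    refine ⟨x', a, fun p => encAux x' a p.1 p.2, ?_, encAux_isDyadic x' a, ?_⟩
    · intro pq
      show x' ((0:ℤ) + (pq.1.1 : ℤ), 2 ^ pq.1.1 * (0:ℤ) + (pq.1.2 : ℤ)) = P pq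
      rw [congrP x' (zero_add _) (by ring)]
      have hpos : (0:ℤ) ≤ (pq.1.1 : ℤ) := Int.natCast_nonneg _
      simp only [hx', hpos, if_pos, Int.toNat_natCast]
      exact hg pq
    · intro c
      set y' : ℤ × ℤ → A := fun p => encAux x' a p.1 p.2 with hy'def
      have hy' : IsDyadicEncoding x' a y' := encAux_isDyadic x' a
      show y (g.1 + (n : ℤ) + ((1:ℕ) : ℤ), 2 ^ (n + 1) * g.2 + ((c : ℕ) : ℤ))
        = y' ((n : ℤ) + ((1:ℕ) : ℤ), ((c : ℕ) : ℤ))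
      obtain ⟨t, u, htu⟩ := trailing_decomp (c : ℕ)
      have hcbound : (c : ℕ) < 2 ^ (n + 1) := c.2
      by_cases ht : t ≤ n
      · -- generic column
        have hcol : ((c : ℕ) : ℤ) = 2 ^ (t + 1) * (u : ℤ) + 2 ^ t - 1 := by
          have := congrArg (fun m : ℕ => (m : ℤ)) htu
          push_cast at this
          linarith
        have hexp : (2:ℤ) ^ (t + 1) * 2 ^ (n - t) = 2 ^ (n + 1) := by
          rw [← pow_add]; congr 1; omega
        -- LHS
        have hL : y (g.1 + (n : ℤ) + ((1:ℕ) : ℤ), 2 ^ (n + 1) * g.2 + ((c : ℕ) : ℤ))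
            = x (g.1 + ((n - t : ℕ) : ℤ), 2 ^ (n - t) * g.2 + (u : ℤ)) := by
          rw [congrP y rfl (show 2 ^ (n + 1) * g.2 + ((c : ℕ) : ℤ)
            = 2 ^ (t + 1) * (2 ^ (n - t) * g.2 + (u : ℤ)) + 2 ^ t - 1 by
              rw [hcol]; rw [mul_add, ← mul_assoc, hexp]; ring)]
          rw [dyadic_L1 hy t _ _]
          exact congrP x (by push_cast; omega) rfl
        -- RHS
        have hR : y' ((n : ℤ) + ((1:ℕ) : ℤ), ((c : ℕ) : ℤ))
            = x' (((n - t : ℕ) : ℤ), (u : ℤ)) := by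
          rw [congrP y' rfl hcol, dyadic_L1 hy' t _ _]
          exact congrP x' (by push_cast; omega) rfl
        rw [hL, hR]
        have hpos : (0:ℤ) ≤ ((n - t : ℕ) : ℤ) := Int.natCast_nonneg _
        simp only [hx', hpos, if_pos, Int.toNat_natCast]
      · -- all-ones column: t = n+1, u = 0, c = 2^(n+1)-1
        have h1 : 2 ^ t ≤ 2 ^ (n + 1) := by
          calc 2 ^ t ≤ (c : ℕ) + 1 := by omega
          _ ≤ 2 ^ (n + 1) := hcbound
        have ht' : t ≤ n + 1 := (Nat.pow_le_pow_iff_right (by norm_num)).mp h1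
        have ht2 : t = n + 1 := by omega
        subst ht2
        have hu : u = 0 := by
          by_contra hu0
          have : 2 ^ (n + 1 + 1) * 1 ≤ 2 ^ (n + 1 + 1) * u :=
            Nat.mul_le_mul_left _ (by omega)
          have h2 : 2 ^ (n + 1) < 2 ^ (n + 1 + 1) := by
            exact Nat.pow_lt_pow_right (by norm_num) (by omega)
          omega
        subst hu
        have hcval : ((c : ℕ) : ℤ) = 2 ^ (n + 1) * 1 - 1 := by
          have := congrArg (fun m : ℕ => (m : ℤ)) htu
          push_cast at this
          linarith
        -- LHS
        have hL : y (g.1 + (n : ℤ) + ((1:ℕ) : ℤ), 2 ^ (n + 1) * g.2 + ((c : ℕ) : ℤ))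
            = y g := by
          rw [congrP y rfl (show 2 ^ (n + 1) * g.2 + ((c : ℕ) : ℤ)
            = 2 ^ (n + 1) * (g.2 + 1) - 1 by rw [hcval]; ring)]
          rw [dyadic_L2 hy (n + 1) _ _]
          have : y (g.1 + (n : ℤ) + ((1:ℕ) : ℤ) - ((n + 1 : ℕ) : ℤ), g.2 + 1 - 1)
              = y (g.1, g.2) := congrP y (by push_cast; ring) (by ring)
          rw [this]
        -- RHS
        have hR : y' ((n : ℤ) + ((1:ℕ) : ℤ), ((c : ℕ) : ℤ)) = y g := by
          rw [congrP y' rfl hcval, dyadic_L2 hy' (n + 1) _ _]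
          have h0 : y' ((n : ℤ) + ((1:ℕ) : ℤ) - ((n + 1 : ℕ) : ℤ), (1:ℤ) - 1)
              = y' (0, 0) := congrP y' (by push_cast; ring) (by ring)
          rw [h0]
          have h3 := hy'.1 (-1) 0
          have h4 : y' ((-1 : ℤ) + 1, 2 * (0:ℤ)) = y' (0, 0) :=
            congrP y' (by ring) (by ring)
          rw [h4] at h3
          rw [h3]
          have hneg : ¬ ((0:ℤ) ≤ (-1 : ℤ)) := by norm_num
          simp only [hx', hneg, if_false]
        rw [hL, hR]
  · intro h
    have a : A := Classical.arbitrary A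
    obtain ⟨k, hk, ℓ, ⟨x'', a'', y'', hP, hy'', hrow⟩, n₀, k₀, happ⟩ :=
      h a (fun p => encAux x a p.1 p.2) (encAux_isDyadic x a)
    have hy : IsDyadicEncoding x a (fun p => encAux x a p.1 p.2) := encAux_isDyadic x a
    refine ⟨(n₀, k₀), ?_⟩
    rintro ⟨⟨p, q⟩, hpq⟩
    have hp : p < n := by
      have := hpq.1
      simp only [U, Set.mem_setOf_eq] at this ⊢
      omega
    have hq : q + 1 ≤ 2 ^ p := by
      have h2 := hpq.2
      have h3 : 1 ≤ 2 ^ p := Nat.one_le_two_pow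
      simp only [U, Set.mem_setOf_eq] at h2
      omega
    set t := n + k - 1 - p with htdef
    have htp : t + 1 + p = n + k := by omega
    set c : ℕ := 2 ^ (t + 1) * q + 2 ^ t - 1 with hcdef
    have h2t : 1 ≤ 2 ^ t := Nat.one_le_two_pow
    have hc1 : c + 1 = 2 ^ (t + 1) * q + 2 ^ t := by omega
    have hcb : c < 2 ^ (n + k) := by
      have e1 : 2 ^ (t + 1) * (q + 1) ≤ 2 ^ (t + 1) * 2 ^ p :=
        Nat.mul_le_mul_left _ hq
      have e2 : 2 ^ (t + 1) * 2 ^ p = 2 ^ (n + k) := by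
        rw [← pow_add]; congr 1
      have e3 : 2 ^ (t + 1) * (q + 1) = 2 ^ (t + 1) * q + 2 ^ (t + 1) := by ring
      have e4 : 2 ^ t < 2 ^ (t + 1) := Nat.pow_lt_pow_right (by norm_num) (by omega)
      omega
    have hcZ : ((c : ℕ) : ℤ) = 2 ^ (t + 1) * (q : ℤ) + 2 ^ t - 1 := by
      have := congrArg (fun m : ℕ => (m : ℤ)) hc1
      push_cast at this
      linarith
    have h1 := happ ⟨c, hcb⟩
    have h2 := hrow ⟨c, hcb⟩
    -- LHS computation
    have hexp : (2:ℤ) ^ (t + 1) * 2 ^ p = 2 ^ (n + k) := by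
      rw [← pow_add]; congr 1
    have hL : (fun pp : ℤ × ℤ => encAux x a pp.1 pp.2)
        (n₀ + (n : ℤ) + (k : ℤ), 2 ^ (n + k) * k₀ + ((c : ℕ) : ℤ))
        = x (n₀ + (p : ℤ), 2 ^ p * k₀ + (q : ℤ)) := by
      have hcol : 2 ^ (n + k) * k₀ + ((c : ℕ) : ℤ)
          = 2 ^ (t + 1) * (2 ^ p * k₀ + (q : ℤ)) + 2 ^ t - 1 := by
        rw [hcZ, mul_add, ← mul_assoc, hexp]; ring
      show encAux x a (n₀ + (n : ℤ) + (k : ℤ)) (2 ^ (n + k) * k₀ + ((c : ℕ) : ℤ))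
        = x (n₀ + (p : ℤ), 2 ^ p * k₀ + (q : ℤ))
      rw [hcol]
      have h6 := dyadic_L1 hy t (n₀ + (n : ℤ) + (k : ℤ)) (2 ^ p * k₀ + (q : ℤ))
      simp only [] at h6
      exact h6.trans (congrP x (by push_cast; omega) rfl)
    have hR : y'' ((n : ℤ) + (k : ℤ), ((c : ℕ) : ℤ)) = P ⟨(p, q), hpq⟩ := by
      rw [congrP y'' rfl hcZ, dyadic_L1 hy'' t _ _]
      have h5 : x'' ((n : ℤ) + (k : ℤ) - 1 - (t : ℤ), (q : ℤ))
          = x'' ((0:ℤ) + (p : ℤ), 2 ^ p * (0:ℤ) + (q : ℤ)) :=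
        congrP x'' (by push_cast; omega) (by ring)
      rw [h5]
      exact hP ⟨(p, q), hpq⟩
    show x ((n₀, k₀).1 + (p : ℤ), 2 ^ p * (n₀, k₀).2 + (q : ℤ)) = P ⟨(p, q), hpq⟩
    calc x (n₀ + (p : ℤ), 2 ^ p * k₀ + (q : ℤ))
        = (fun pp : ℤ × ℤ => encAux x a pp.1 pp.2)
            (n₀ + (n : ℤ) + (k : ℤ), 2 ^ (n + k) * k₀ + ((c : ℕ) : ℤ)) := hL.symm
      _ = ℓ ⟨c, hcb⟩ := h1
      _ = y'' ((n : ℤ) + (k : ℤ), ((c : ℕ) : ℤ)) := h2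
      _ = P ⟨(p, q), hpq⟩ := hR
end

section
/- For every alphabet A, every configuration x : ℤ × ℤ → A and every letter a ∈ A, there exists a unique function y : ℤ × ℤ → A satisfying all three conditions: y(n+1, 2k) = x(n, k) for all n, k ∈ ℤ; y(n+1, 2k+1) = y(n, k) for all n, k ∈ ℤ; and y(n, −1) = a for all n ∈ ℤ. (That is, the dyadic encoding of x with filler a exists and is unique.) -/
private def enc {A : Type*} (x : ℤ × ℤ → A) (a : A) : ℤ → ℤ → A
  | n, k =>
    if k = -1 then a
    else if Even k then x (n - 1, k / 2)
    else enc x a (n - 1) ((k - 1) / 2)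
termination_by n k => (k + 1).natAbs
decreasing_by
  rename_i h1 h2
  obtain ⟨m, hm⟩ := Int.not_even_iff_odd.mp h2
  have hm' : (k - 1) / 2 = m := by omega
  rw [hm']
  have : k + 1 = 2 * (m + 1) := by omega
  rw [this]
  have hne : m + 1 ≠ 0 := by omega
  simp [Int.natAbs_mul]
  omega

private lemma enc_def {A : Type*} (x : ℤ × ℤ → A) (a : A) (n k : ℤ) :
    enc x a n k = if k = -1 then a
      else if Even k then x (n - 1, k / 2)
      else enc x a (n - 1) ((k - 1) / 2) := by
  rw [enc]

/-- The dyadic encoding of a configuration `x` with filler letter `a` exists and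
is unique: there is a unique `y : ℤ × ℤ → A` with `y(n+1, 2k) = x(n, k)`,
`y(n+1, 2k+1) = y(n, k)` and `y(n, -1) = a`. -/
theorem dyadicEncoding_existsUnique {A : Type*} (x : ℤ × ℤ → A) (a : A) :
    ∃! y : ℤ × ℤ → A,
      (∀ n k : ℤ, y (n + 1, 2 * k) = x (n, k)) ∧
      (∀ n k : ℤ, y (n + 1, 2 * k + 1) = y (n, k)) ∧
      (∀ n : ℤ, y (n, -1) = a) := by
  refine ⟨fun p => enc x a p.1 p.2, ⟨?_, ?_, ?_⟩, ?_⟩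
  · intro n k
    show enc x a (n + 1) (2 * k) = x (n, k)
    rw [enc_def]
    have h1 : (2 * k : ℤ) ≠ -1 := by omega
    have h2 : Even (2 * k) := ⟨k, by ring⟩
    simp [h1, h2, Int.mul_ediv_cancel_left k (by norm_num : (2:ℤ) ≠ 0)]
  · intro n k
    show enc x a (n + 1) (2 * k + 1) = enc x a n k
    rw [enc_def]
    by_cases hk : k = -1
    · subst hk
      norm_num
      rw [enc_def]; simp
    · have h1 : (2 * k + 1 : ℤ) ≠ -1 := by omega
      have h2 : ¬ Even (2 * k + 1) := by
        rw [Int.even_add_one, not_not]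
        exact ⟨k, by ring⟩
      simp only [h1, h2, if_false]
      congr 1
      · omega
      · omega
  · intro n
    show enc x a n (-1) = a
    rw [enc_def]; simp
  · intro y ⟨hy1, hy2, hy3⟩
    funext p
    obtain ⟨n, k⟩ := p
    simp only
    have key : ∀ N : ℕ, ∀ k n : ℤ, (k + 1).natAbs ≤ N → y (n, k) = enc x a n k := by
      intro N
      induction N with
      | zero =>
        intro k n h
        have : k = -1 := by omega
        subst this
        rw [enc_def]; simp [hy3]
      | succ N ih =>
        intro k n h
        by_cases hk : k = -1
        · subst hk; rw [enc_def]; simp [hy3]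
        · rw [enc_def]
          by_cases he : Even k
          · have he2 := he
            obtain ⟨m, hm⟩ := he2
            have hm' : k = 2 * m := by omega
            have : y (n, k) = x (n - 1, m) := by
              have := hy1 (n - 1) m
              rw [show n - 1 + 1 = n by ring, ← hm'] at this
              exact this
            rw [if_neg hk, if_pos he, this, show k / 2 = m by omega]
          · obtain ⟨m, hm⟩ := Int.not_even_iff_odd.mp he
            have h1 : y (n, k) = y (n - 1, m) := by
              have := hy2 (n - 1) m
              rw [show n - 1 + 1 = n by ring, ← hm] at this
              exact this
            have h2 : (m + 1).natAbs ≤ N := by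
              have hk1 : (k + 1).natAbs = 2 * (m + 1).natAbs := by
                rw [show k + 1 = 2 * (m + 1) by omega]
                simp [Int.natAbs_mul]
              omega
            rw [h1, ih m (n - 1) h2]
            simp only [hk, he, if_false]
            congr 1
            omega
    exact key (k + 1).natAbs k n le_rfl
end

section
/- Let A be a finite alphabet, x : ℤ × ℤ → A a configuration, a ∈ A, and y the dyadic encoding of x with filler a. Then for all (n, k) ∈ ℤ × ℤ and every integer m ≥ 1, one has y(n + m, 2^m·k + 2^{m−1} − 1) = x(n, k). (In the paper's notation: x_g = π₂(Φ(x))_{g·α^m·β^{2^{m−1}−1}} = π₂(Φ(x))_{g·α·(αβ)^{m−1}} for all m ≥ 1.) -/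
/-- In the dyadic encoding, the value `x(n, k)` reappears on every row `m ≥ 1` below:
`y(n + m, 2^m·k + 2^(m-1) - 1) = x(n, k)`; in the paper's notation
`x_g = π₂(Φ(x))_{g·αᵐ·β^(2^(m-1)-1)}`. -/
theorem dyadicEncoding_copies_below {A : Type} [Fintype A] [Nonempty A]
    (x : ℤ × ℤ → A) (a : A) (y : ℤ × ℤ → A) (hy : IsDyadicEncoding x a y)
    (n k : ℤ) (m : ℕ) (hm : 1 ≤ m) :
    y (n + m, 2 ^ m * k + 2 ^ (m - 1) - 1) = x (n, k) := by
  obtain ⟨h1, h2, h3⟩ := hy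
  induction m, hm using Nat.le_induction with
  | base =>
    have := h1 n k
    simpa using this
  | succ m hm ih =>
    have hsub : (m + 1 - 1 : ℕ) = m := by omega
    have hm1 : (m - 1 : ℕ) + 1 = m := by omega
    have hidx : (2 : ℤ) ^ (m + 1) * k + 2 ^ (m + 1 - 1) - 1
        = 2 * (2 ^ m * k + 2 ^ (m - 1) - 1) + 1 := by
      rw [hsub]
      have : (2 : ℤ) ^ m = 2 * 2 ^ (m - 1) := by
        rw [← pow_succ']
        congr 1
        omega
      rw [pow_succ, this]
      ring
    have hrow : (n + ((m : ℤ) + 1)) = (n + (m : ℤ)) + 1 := by ring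
    push_cast
    rw [hrow]
    push_cast at hidx
    rw [hidx, h2 (n + (m : ℤ)) (2 ^ m * k + 2 ^ (m - 1) - 1)]
    exact ih
end

section
/- Let A be a finite alphabet, x : ℤ × ℤ → A a configuration, a ∈ A, and y the dyadic encoding of x with filler a. Then for all (n, k) ∈ ℤ × ℤ and every natural number j, one has y(n + j, 2^j·k + 2^j − 1) = y(n, k); i.e. the second layer of the dyadic encoding is constant along rightmost-descendant chains: π₂(Φ(x))_{g·(αβ)^j} = π₂(Φ(x))_g for all j ≥ 0. -/
/-- The second layer of the dyadic encoding is constant along rightmost-descendant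
chains: `y(n + j, 2^j·k + 2^j - 1) = y(n, k)` for all `j ≥ 0`, i.e.
`π₂(Φ(x))_{g·(αβ)ʲ} = π₂(Φ(x))_g`. -/
theorem dyadicEncoding_constant_on_chains {A : Type} [Fintype A] [Nonempty A]
    (x : ℤ × ℤ → A) (a : A) (y : ℤ × ℤ → A) (hy : IsDyadicEncoding x a y)
    (n k : ℤ) (j : ℕ) :
    y (n + j, 2 ^ j * k + 2 ^ j - 1) = y (n, k) := by
  induction j with
  | zero => simp
  | succ j ih =>
      have h := hy.2.1 (n + j) (2 ^ j * k + 2 ^ j - 1)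
      have e1 : ((n : ℤ) + (j + 1 : ℕ)) = (n + j) + 1 := by push_cast; ring
      have e2 : (2 : ℤ) ^ (j + 1) * k + 2 ^ (j + 1) - 1
          = 2 * (2 ^ j * k + 2 ^ j - 1) + 1 := by ring
      rw [e1, e2, h, ih]
end

section
/- For every integer n ≥ 1, the map (p, q) ↦ 2^{n+1−p}·q + 2^{n−p} − 1 is injective on the support 𝕌_n = {(p, q) ∈ ℕ × ℕ : p ≤ n − 1 and q ≤ 2^p − 1}, and all its values lie in {0, 1, …, 2^{n+1} − 1}. (Hence the cells of a pattern with support 𝕌_n are encoded at pairwise distinct positions of the linear support L_n of size 2^{n+1} lying on the row n+1 rows below, so the whole information of the pattern is contained in a single linear pattern of its dyadic encoding.) -/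
lemma two_pow_odd_inj (a : ℕ) : ∀ b q1 q2 : ℕ,
    2 ^ a * (2 * q1 + 1) = 2 ^ b * (2 * q2 + 1) → a = b ∧ q1 = q2 := by
  induction a with
  | zero =>
    intro b q1 q2 h
    cases b with
    | zero => simp at h; omega
    | succ b =>
      exfalso
      have hd : 2 ∣ 2 ^ (b + 1) * (2 * q2 + 1) :=
        Dvd.dvd.mul_right (dvd_pow_self 2 (Nat.succ_ne_zero b)) _
      simp only [pow_zero, one_mul] at h
      omega
  | succ a ih =>
    intro b q1 q2 h
    cases b with
    | zero =>
      exfalso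
      have hd : 2 ∣ 2 ^ (a + 1) * (2 * q1 + 1) :=
        Dvd.dvd.mul_right (dvd_pow_self 2 (Nat.succ_ne_zero a)) _
      simp only [pow_zero, one_mul] at h
      omega
    | succ b =>
      rw [pow_succ', pow_succ', mul_assoc, mul_assoc] at h
      have h' := Nat.eq_of_mul_eq_mul_left (by norm_num) h
      obtain ⟨h1, h2⟩ := ih b q1 q2 h'
      exact ⟨by omega, h2⟩

lemma key_eq (n p q : ℕ) (hp : p ≤ n) :
    2 ^ (n + 1 - p) * q + 2 ^ (n - p) = 2 ^ (n - p) * (2 * q + 1) := by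
  have h1 : n + 1 - p = (n - p) + 1 := by omega
  rw [h1, pow_succ]; ring

/-- For `n ≥ 1`, the map `(p, q) ↦ 2^(n+1-p)·q + 2^(n-p) - 1` is injective on the
support `𝕌_n` and takes all its values in `{0, 1, …, 2^(n+1) - 1}`: the cells of a
pattern with support `𝕌_n` are encoded at pairwise distinct positions of the linear
support of size `2^(n+1)` on the row `n+1` rows below. -/
theorem dyadic_cell_encoding_injective (n : ℕ) (hn : 1 ≤ n) :
    Set.InjOn (fun pq : ℕ × ℕ => 2 ^ (n + 1 - pq.1) * pq.2 + 2 ^ (n - pq.1) - 1) (U n) ∧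
    ∀ pq ∈ U n, 2 ^ (n + 1 - pq.1) * pq.2 + 2 ^ (n - pq.1) - 1 ≤ 2 ^ (n + 1) - 1 := by
  constructor
  · rintro ⟨p1, q1⟩ ⟨hp1, hq1⟩ ⟨p2, q2⟩ ⟨hp2, hq2⟩ heq
    simp only at heq hp1 hp2
    have hp1n : p1 ≤ n := by omega
    have hp2n : p2 ≤ n := by omega
    rw [key_eq n p1 q1 hp1n, key_eq n p2 q2 hp2n] at heq
    have h1 : 1 ≤ 2 ^ (n - p1) * (2 * q1 + 1) := Nat.one_le_iff_ne_zero.mpr (by positivity)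
    have h2 : 1 ≤ 2 ^ (n - p2) * (2 * q2 + 1) := Nat.one_le_iff_ne_zero.mpr (by positivity)
    have heq' : 2 ^ (n - p1) * (2 * q1 + 1) = 2 ^ (n - p2) * (2 * q2 + 1) := by omega
    obtain ⟨ha, hb⟩ := two_pow_odd_inj (n - p1) (n - p2) q1 q2 heq'
    have : p1 = p2 := by omega
    simp [this, hb]
  · rintro ⟨p, q⟩ ⟨hp, hq⟩
    simp only at hp hq ⊢
    have hpn : p ≤ n := by omega
    rw [key_eq n p q hpn]
    have hq' : 2 * q + 1 ≤ 2 ^ (p + 1) := by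
      have : 1 ≤ 2 ^ p := Nat.one_le_two_pow
      omega
    calc 2 ^ (n - p) * (2 * q + 1) - 1 ≤ 2 ^ (n - p) * 2 ^ (p + 1) - 1 := by
          exact Nat.sub_le_sub_right (Nat.mul_le_mul_left _ hq') 1
      _ = 2 ^ (n + 1) - 1 := by
          have hnp : n - p + (p + 1) = n + 1 := by omega
          rw [← pow_add, hnp]
end

section
/- Let A be a finite alphabet and Σ ⊆ A^{ℤ×ℤ} a set of colourings of finite type. Define the dyadic encoding Φ(Σ) ⊆ (A × A)^{ℤ×ℤ} as the set of configurations z : ℤ × ℤ → A × A such that (i) the first-component configuration π₁ ∘ z belongs to Σ, and (ii) the second component satisfies π₂(z(n+1, 2k)) = π₁(z(n, k)) and π₂(z(n+1, 2k+1)) = π₂(z(n, k)) for all n, k ∈ ℤ. Then Φ(Σ) is a set of colourings of finite type over the alphabet A × A. -/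
instance (n : ℕ) : DecidablePred (· ∈ U n) := fun pq =>
  inferInstanceAs (Decidable (pq.1 ≤ n - 1 ∧ pq.2 ≤ 2 ^ pq.1 - 1))

instance (n : ℕ) : Fintype (U n) :=
  Fintype.ofFinset ((Finset.range (n + 1) ×ˢ Finset.range (2 ^ (n + 1))).filter (· ∈ U n))
    (by
      intro pq
      simp only [Finset.mem_filter, Finset.mem_product, Finset.mem_range]
      constructor
      · exact fun h => h.2
      · intro h
        obtain ⟨h1, h2⟩ := h
        refine ⟨⟨by omega, ?_⟩, ⟨h1, h2⟩⟩
        have hp : 2 ^ pq.1 ≤ 2 ^ (n + 1) := Nat.pow_le_pow_right (by norm_num) (by omega)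
        have : 0 < 2 ^ pq.1 := Nat.pow_pos (by norm_num)
        omega)

/-- A pattern over alphabet `A`: a size `n+1 ≥ 1` together with a colouring of `𝕌_{n+1}`. -/
def Pattern (A : Type) : Type := Σ n : ℕ, (U (n + 1) → A)

/-- The size of a pattern (always ≥ 1). -/
def Pattern.size {A : Type} (P : Pattern A) : ℕ := P.1 + 1

instance {A : Type} [Encodable A] (n : ℕ) : Encodable (↥(U n) → A) :=
  Encodable.fintypeArrowOfEncodable

instance {A : Type} [Encodable A] : Encodable (Pattern A) :=
  inferInstanceAs (Encodable (Σ n : ℕ, (U (n + 1) → A)))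

/-- The pattern `P` appears somewhere in the configuration `x`. -/
def Pattern.Appears {A : Type} (P : Pattern A) (x : ℤ × ℤ → A) : Prop :=
  ∃ g : ℤ × ℤ, AppearsAt P.2 x g

/-- The set of colourings avoiding every pattern of `F`. -/
def colourings {A : Type} (F : Set (Pattern A)) : Set ((ℤ × ℤ) → A) :=
  {x | ∀ P ∈ F, ¬ P.Appears x}

/-- A set of colourings is of finite type (CFT). -/
def IsCFT {A : Type} (S : Set ((ℤ × ℤ) → A)) : Prop :=
  ∃ F : Set (Pattern A), F.Finite ∧ S = colourings F

/-- A set of colourings is sofic: letter-to-letter projection of a CFT. -/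
def IsSofic {A : Type} (S : Set ((ℤ × ℤ) → A)) : Prop :=
  ∃ (B : Type) (_ : Fintype B) (S' : Set ((ℤ × ℤ) → B)) (φ : B → A),
    IsCFT S' ∧ S = (fun w => φ ∘ w) '' S'

/-- A set of colourings is effective: defined by a set of forbidden patterns whose
set of codes (under the standard encoding of patterns) is recursively enumerable. -/
def IsEffective {A : Type} [Encodable A] (S : Set ((ℤ × ℤ) → A)) : Prop :=
  ∃ F : Set (Pattern A),
    REPred (fun c : ℕ => ∃ P ∈ F, Encodable.encode P = c) ∧ S = colourings F

/-- The dyadic encoding of a set of colourings `S`: configurations over `A × A` whose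
first component lies in `S` and whose second component is the dyadic encoding of the
first one, i.e. `π₂(z(n+1, 2k)) = π₁(z(n, k))` and `π₂(z(n+1, 2k+1)) = π₂(z(n, k))`. -/
def DyadicImage {A : Type} (S : Set ((ℤ × ℤ) → A)) : Set ((ℤ × ℤ) → A × A) :=
  {z | (fun g => (z g).1) ∈ S ∧
    ∀ n k : ℤ, (z (n + 1, 2 * k)).2 = (z (n, k)).1 ∧ (z (n + 1, 2 * k + 1)).2 = (z (n, k)).2}

def u00 : U 2 := ⟨(0, 0), ⟨by norm_num, by norm_num⟩⟩
def u10 : U 2 := ⟨(1, 0), ⟨by norm_num, by norm_num⟩⟩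
def u11 : U 2 := ⟨(1, 1), ⟨by norm_num, by norm_num⟩⟩

/-- Forbidden patterns enforcing the first-component condition. -/
def DyF1 {A : Type} (F : Set (Pattern A)) : Set (Pattern (A × A)) :=
  {Q | ∃ P ∈ F, ∃ s : U (P.1 + 1) → A, Q = ⟨P.1, fun u => (P.2 u, s u)⟩}

/-- Forbidden patterns enforcing the dyadic condition. -/
def DyF2 (A : Type) : Set (Pattern (A × A)) :=
  {Q | ∃ f : U 2 → A × A, Q = ⟨1, f⟩ ∧
    ((f u10).2 ≠ (f u00).1 ∨ (f u11).2 ≠ (f u00).2)}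

lemma DyF1_finite {A : Type} [Fintype A] {F : Set (Pattern A)} (hF : F.Finite) :
    (DyF1 F).Finite := by
  have : DyF1 F ⊆ ⋃ P ∈ F, Set.range
      (fun s : U (P.1 + 1) → A => (⟨P.1, fun u => (P.2 u, s u)⟩ : Pattern (A × A))) := by
    rintro Q ⟨P, hP, s, rfl⟩
    exact Set.mem_biUnion hP ⟨s, rfl⟩
  exact (hF.biUnion (fun P _ => Set.finite_range _)).subset this

lemma DyF2_finite {A : Type} [Fintype A] : (DyF2 A).Finite := by
  have : DyF2 A ⊆ Set.range (fun f : U 2 → A × A => (⟨1, f⟩ : Pattern (A × A))) := by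
    rintro Q ⟨f, rfl, -⟩
    exact ⟨f, rfl⟩
  exact (Set.finite_range _).subset this

/-- The dyadic encoding of a set of colourings of finite type is of finite type. -/
theorem dyadicImage_isCFT {A : Type} [Fintype A] [Nonempty A]
    (S : Set ((ℤ × ℤ) → A)) (hS : IsCFT S) : IsCFT (DyadicImage S) := by
  classical
  obtain ⟨F, hF, rfl⟩ := hS
  refine ⟨DyF1 F ∪ DyF2 A, (DyF1_finite hF).union DyF2_finite, ?_⟩
  ext z
  constructor
  · rintro ⟨hz1, hz2⟩ Q hQ ⟨g, hg⟩
    rcases hQ with hQ | hQ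
    · obtain ⟨P, hP, s, rfl⟩ := hQ
      exact hz1 P hP ⟨g, fun u => congrArg Prod.fst (hg u)⟩
    · obtain ⟨f, rfl, hbad⟩ := hQ
      have h00 := hg u00
      have h10 := hg u10
      have h11 := hg u11
      simp only [u00, u10, u11, Nat.cast_zero, Nat.cast_one, pow_zero, pow_one,
        one_mul, add_zero] at h00 h10 h11
      obtain ⟨hz2a, hz2b⟩ := hz2 g.1 g.2
      have h00' : f u00 = z (g.1, g.2) := h00.symm
      have h10' : f u10 = z (g.1 + 1, 2 * g.2) := h10.symm
      have h11' : f u11 = z (g.1 + 1, 2 * g.2 + 1) := h11.symm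
      rcases hbad with hbad | hbad
      · exact hbad (by rw [h10', h00']; exact hz2a)
      · exact hbad (by rw [h11', h00']; exact hz2b)
  · intro hz
    constructor
    · intro P hP ⟨g, hg⟩
      refine hz ⟨P.1, fun u => (P.2 u,
          (z (g.1 + (u.1.1 : ℤ), 2 ^ u.1.1 * g.2 + (u.1.2 : ℤ))).2)⟩
        (Or.inl ⟨P, hP, _, rfl⟩) ⟨g, fun u => ?_⟩
      exact Prod.ext (hg u) rfl
    · intro n k
      set f : U 2 → A × A :=
        fun u => z (n + (u.1.1 : ℤ), 2 ^ u.1.1 * k + (u.1.2 : ℤ)) with hf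
      have happ : AppearsAt f z (n, k) := fun u => rfl
      have e00 : f u00 = z (n, k) := by
        simp [hf, u00]
      have e10 : f u10 = z (n + 1, 2 * k) := by
        simp [hf, u10]
      have e11 : f u11 = z (n + 1, 2 * k + 1) := by
        simp [hf, u11]
      have hnotbad : ¬ ((f u10).2 ≠ (f u00).1 ∨ (f u11).2 ≠ (f u00).2) := by
        intro hbad
        exact hz ⟨1, f⟩ (Or.inr ⟨f, rfl, hbad⟩) ⟨(n, k), happ⟩
      push_neg at hnotbad
      rw [e00, e10, e11] at hnotbad
      exact hnotbad
end
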